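/- arXiv:1704.05621 — 2 statements merged into one kernel-verified Lean document; each statement's English description precedes it below -/
import Mathlib

section
/- Let P be a naturally labeled partial order on {1,2,…,m} and let b_1 ≤ ⋯ ≤ b_m be the increasing rearrangement of mc(1),…,mc(m). Then for every π ∈ L(P) and every integer 0 ≤ k ≤ m, maj(π) − k·des(π) + k(k+1)/2 ≥ b_1 + b_2 + ⋯ + b_k. -/
open Finset Polynomial LaurentPolynomial

attribute [local instance] Classical.propDecidable

/-- The value `π_i` of the word of `π` at the 1-based position `i` (values in `{1, …, m}`). -/
def wordAt (m : ℕ) (π : Equiv.Perm (Fin m)) (i : ℕ) : ℕ :=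
  if h : i - 1 < m then ((π ⟨i - 1, h⟩ : Fin m) : ℕ) + 1 else 0

/-- The descent set `Des(π) ⊆ {1, …, m-1}` (1-based positions). -/
def DesSet (m : ℕ) (π : Equiv.Perm (Fin m)) : Finset ℕ :=
  (Finset.Ico 1 m).filter fun i => wordAt m π (i + 1) < wordAt m π i

/-- The number of descents `des(π)`. -/
def desNum (m : ℕ) (π : Equiv.Perm (Fin m)) : ℕ := (DesSet m π).card

/-- The major index `maj(π)`. -/
def majIdx (m : ℕ) (π : Equiv.Perm (Fin m)) : ℕ := ∑ i ∈ DesSet m π, i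

/-- The partial order `P` on `{1,…,m}` (encoded as `Fin m`) is naturally labeled:
`x ≤_P y` implies `x ≤ y` as integers. -/
def NatLabeled (m : ℕ) (P : PartialOrder (Fin m)) : Prop :=
  ∀ x y : Fin m, P.le x y → x ≤ y

/-- `π` is a linear extension of `P`: `π_i ≤_P π_j` implies `i ≤ j`. -/
def IsLinExt (m : ℕ) (P : PartialOrder (Fin m)) (π : Equiv.Perm (Fin m)) : Prop :=
  ∀ i j : Fin m, P.le (π i) (π j) → i ≤ j

/-- `mc(x)`: the maximum number of elements of a chain of `P` whose largest element is `x`. -/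
noncomputable def mc (m : ℕ) (P : PartialOrder (Fin m)) (x : Fin m) : ℕ :=
  sSup {k : ℕ | ∃ s : Finset (Fin m),
    s.card = k ∧ IsChain P.le ↑s ∧ x ∈ s ∧ ∀ y ∈ s, P.le y x}

/-- `m̄c(x)`: the maximum number of elements of a chain of `P` whose smallest element is `x`. -/
noncomputable def mcUp (m : ℕ) (P : PartialOrder (Fin m)) (x : Fin m) : ℕ :=
  sSup {k : ℕ | ∃ s : Finset (Fin m),
    s.card = k ∧ IsChain P.le ↑s ∧ x ∈ s ∧ ∀ y ∈ s, P.le x y}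

/-- The `q`-integer `[n]_q` for `n ∈ ℤ`, as a Laurent polynomial:
`[n]_q = 1 + q + ⋯ + q^{n-1}` for `n ≥ 0` and `[-n]_q = -q^{-n} [n]_q`. -/
noncomputable def qInt (n : ℤ) : LaurentPolynomial ℤ :=
  if 0 ≤ n then ∑ i ∈ Finset.range n.toNat, T (i : ℤ)
  else -(T n * ∑ i ∈ Finset.range (-n).toNat, T (i : ℤ))

/-- The polynomial `F_P(q,x) = Σ_{π ∈ L(P)} q^{maj π} Π_{i=1}^m ([i - des π]_q + q^{i - des π} x)`,
an element of `(ℤ[q,q⁻¹])[x]` (it in fact lies in `ℤ[q,x]`). -/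
noncomputable def Fpoly (m : ℕ) (P : PartialOrder (Fin m)) : Polynomial (LaurentPolynomial ℤ) :=
  ∑ π ∈ Finset.univ.filter (fun π => IsLinExt m P π),
    Polynomial.C (T (majIdx m π : ℤ)) *
      ∏ i ∈ Finset.Icc 1 m,
        (Polynomial.C (qInt ((i : ℤ) - desNum m π)) +
          Polynomial.C (T ((i : ℤ) - desNum m π)) * Polynomial.X)

/-- The Newton polygon of an element of `(ℤ[q,q⁻¹])[x]`, in the `(q,x)`-plane. -/
noncomputable def NTL (f : Polynomial (LaurentPolynomial ℤ)) : Set (ℝ × ℝ) :=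
  convexHull ℝ {p : ℝ × ℝ | ∃ (i : ℤ) (k : ℕ), AddMonoidAlgebra.coeff (f.coeff k) i ≠ 0 ∧ p = ((i : ℝ), (k : ℝ))}

/-- The Newton polygon of an element of `ℤ[q][x]`, in the `(q,x)`-plane. -/
noncomputable def NTP (f : Polynomial (Polynomial ℤ)) : Set (ℝ × ℝ) :=
  convexHull ℝ {p : ℝ × ℝ | ∃ (i k : ℕ), (f.coeff k).coeff i ≠ 0 ∧ p = ((i : ℝ), (k : ℝ))}

/-- The polygon `C(a_1,…,a_m;h)`: the convex hull of `(0,0)`, `(a_1+⋯+a_i, i)` for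
`1 ≤ i ≤ m`, `(h,m)` and `(h-m,0)`. -/
noncomputable def Cpolygon (m : ℕ) (a : ℕ → ℕ) (h : ℕ) : Set (ℝ × ℝ) :=
  convexHull ℝ ({((0 : ℝ), (0 : ℝ)), ((h : ℝ), (m : ℝ)), ((h : ℝ) - (m : ℝ), (0 : ℝ))} ∪
    {p : ℝ × ℝ | ∃ i ∈ Finset.Icc 1 m, p = ((∑ j ∈ Finset.Icc 1 i, (a j : ℝ)), (i : ℝ))})

/-- The index of the descent block of `π` containing the 1-based position `j`. -/
def blockIdx (m : ℕ) (π : Equiv.Perm (Fin m)) (j : ℕ) : ℕ :=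
  1 + ((Finset.Ico 1 j).filter (fun i => i ∉ DesSet m π)).card

/-- `DB_i(π)`: the set of entries of the `i`-th descent block of `π`. -/
def DB (m : ℕ) (π : Equiv.Perm (Fin m)) (i : ℕ) : Finset (Fin m) :=
  Finset.univ.filter fun x => blockIdx m π (((π.symm x : Fin m) : ℕ) + 1) = i

/-- `PP(P,n)`: the set of `P`-partitions (order-reversing maps) with all parts at most `n`,
encoded as functions `Fin m → Fin (n+1)`. -/
noncomputable def PPset (m : ℕ) (P : PartialOrder (Fin m)) (n : ℕ) :
    Finset (Fin m → Fin (n + 1)) :=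
  Finset.univ.filter fun σ => ∀ x y : Fin m, P.le x y → σ y ≤ σ x

/-- `|σ| = σ(1) + ⋯ + σ(m)`. -/
def sizePP (m n : ℕ) (σ : Fin m → Fin (n + 1)) : ℕ := ∑ i : Fin m, (σ i : ℕ)

/-- The `q`-integer `[n]_q` for `n ∈ ℕ`, as an ordinary polynomial in `q`. -/
noncomputable def qIntP (n : ℕ) : Polynomial ℤ := ∑ i ∈ Finset.range n, Polynomial.X ^ i

/-- The `q`-factorial `[n]_q!`. -/
noncomputable def qFact (n : ℕ) : Polynomial ℤ := ∏ i ∈ Finset.Icc 1 n, qIntP i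

/-- The dual poset `P̄` : `x ≤_{P̄} y` iff `y ≤_P x`. -/
def dualP (m : ℕ) (P : PartialOrder (Fin m)) : PartialOrder (Fin m) where
  le x y := P.le y x
  lt x y := P.lt y x
  le_refl x := P.le_refl x
  le_trans a b c h1 h2 := P.le_trans c b a h2 h1
  le_antisymm a b h1 h2 := P.le_antisymm a b h2 h1
  lt_iff_le_not_ge a b := P.lt_iff_le_not_ge b a

/-- The canonical ring map `ℤ[q] → ℚ(q)`. -/
noncomputable def toRF : Polynomial ℤ →+* RatFunc ℚ :=
  (algebraMap (Polynomial ℚ) (RatFunc ℚ)).comp (Polynomial.mapRingHom (Int.castRingHom ℚ))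

/-- `W(n·O(P), q) = Σ_σ q^{|σ|}`, the sum being over all order-preserving maps
`σ : P → {0,…,n}`. -/
noncomputable def Wpoly (m : ℕ) (P : PartialOrder (Fin m)) (n : ℕ) : Polynomial ℤ :=
  ∑ σ ∈ (Finset.univ.filter fun σ : Fin m → Fin (n + 1) =>
      ∀ x y : Fin m, P.le x y → σ x ≤ σ y),
    Polynomial.X ^ (∑ i : Fin m, (σ i : ℕ))

/-- The polynomial `q^{mj - s(s-1)/2} Π_{i=1}^{s-1} (x - [i]_q) Π_{i=1}^{m-s} (q^i x + [i]_q)`. -/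
noncomputable def tSummand (m s mj : ℕ) : Polynomial (LaurentPolynomial ℤ) :=
  Polynomial.C (T ((mj : ℤ) - (s * (s - 1) / 2 : ℕ))) *
    (∏ i ∈ Finset.Icc 1 (s - 1), (Polynomial.X - Polynomial.C (qInt (i : ℤ)))) *
    ∏ i ∈ Finset.Icc 1 (m - s),
      (Polynomial.C (T (i : ℤ)) * Polynomial.X + Polynomial.C (qInt (i : ℤ)))

/-- `t(π,k)`: the coefficient of `x^{k-1}` in
`q^{maj π - s(s-1)/2} Π_{i=1}^{s-1} (x - [i]_q) Π_{i=1}^{m-s} (q^i x + [i]_q)`,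
where `s = des π`. -/
noncomputable def tpoly (m : ℕ) (π : Equiv.Perm (Fin m)) (k : ℕ) : LaurentPolynomial ℤ :=
  (tSummand m (desNum m π) (majIdx m π)).coeff (k - 1)

/-- The polynomial `A(q,x) = Π_{i=1}^m (q^i x + [i]_q)`. -/
noncomputable def Apoly (m : ℕ) : Polynomial (LaurentPolynomial ℤ) :=
  ∏ i ∈ Finset.Icc 1 m,
    (Polynomial.C (T (i : ℤ)) * Polynomial.X + Polynomial.C (qInt (i : ℤ)))

/-- The polynomial `B(q,x) = x Σ_{π ∈ L(P), des π ≥ 1} q^{maj π - s(s-1)/2}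
Π_{i=1}^{s-1} (x - [i]_q) Π_{i=1}^{m-s} (q^i x + [i]_q)`, where `s = des π`;
one has `F_P(q,x) = A(q,x) + B(q,x)`. -/
noncomputable def Bpoly (m : ℕ) (P : PartialOrder (Fin m)) : Polynomial (LaurentPolynomial ℤ) :=
  Polynomial.X *
    ∑ π ∈ Finset.univ.filter (fun π => IsLinExt m P π ∧ 1 ≤ desNum m π),
      tSummand m (desNum m π) (majIdx m π)

section AuxProof

variable {m : ℕ} {P : PartialOrder (Fin m)} {π : Equiv.Perm (Fin m)}

lemma wordAt_succ (π : Equiv.Perm (Fin m)) (j : ℕ) (h : j < m) :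
    wordAt m π (j + 1) = (π ⟨j, h⟩ : ℕ) + 1 := by
  simp [wordAt, h]

lemma desSet_bounds {d : ℕ} (hd : d ∈ DesSet m π) : 1 ≤ d ∧ d < m := by
  have h := (Finset.mem_filter.1 hd).1
  exact Finset.mem_Ico.1 h

lemma desSet_word {d : ℕ} (hd : d ∈ DesSet m π) :
    wordAt m π (d + 1) < wordAt m π d :=
  (Finset.mem_filter.1 hd).2

/-- In a maximal run of descents the word strictly decreases. -/
lemma desc_run (π : Equiv.Perm (Fin m)) :
    ∀ (d p : ℕ),
      (∀ a, p ≤ a → a < p + d → a ∈ DesSet m π) →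
      wordAt m π (p + d) + d ≤ wordAt m π p := by
  intro d
  induction d with
  | zero => intro p _; simp
  | succ d ih =>
    intro p hdes
    have h1 : wordAt m π (p + d) + d ≤ wordAt m π p :=
      ih p (fun a ha1 ha2 => hdes a ha1 (by omega))
    have hmem : p + d ∈ DesSet m π := hdes _ (by omega) (by omega)
    have h2 := desSet_word hmem
    have e : p + (d + 1) = p + d + 1 := by omega
    rw [e]
    omega

/-- Between two comparable elements of a naturally labeled poset there is an ascent. -/
lemma exists_ascent (hnat : NatLabeled m P) (hπ : IsLinExt m P π)
    (x y : Fin m) (hle : P.le y x) (hne : y ≠ x) :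
    ∃ a, a ∈ Finset.Ico 1 m ∧ a ∉ DesSet m π ∧
      (π.symm y : ℕ) < a ∧ a ≤ (π.symm x : ℕ) := by
  have hq' : (π.symm x : ℕ) < m := (π.symm x).isLt
  have hp' : (π.symm y : ℕ) < m := (π.symm y).isLt
  have hpq : (π.symm y : ℕ) ≤ (π.symm x : ℕ) := by
    have h := hπ (π.symm y) (π.symm x) (by simpa using hle)
    exact h
  have hxy : (y : ℕ) ≤ (x : ℕ) := hnat y x hle
  clear hle
  have hpq' : (π.symm y : ℕ) < (π.symm x : ℕ) := by
    rcases Nat.lt_or_ge (π.symm y : ℕ) (π.symm x : ℕ) with h | h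
    · exact h
    · exfalso
      apply hne
      have h2 : π.symm y = π.symm x := Fin.ext (by omega)
      have h3 := congrArg π h2
      simpa using h3
  by_contra hcon
  push_neg at hcon
  have hall : ∀ a, (π.symm y : ℕ) < a → a ≤ (π.symm x : ℕ) → a ∈ DesSet m π := by
    intro a ha1 ha2
    by_contra hnd
    have hico : a ∈ Finset.Ico 1 m := Finset.mem_Ico.2 ⟨by omega, by omega⟩
    have h4 := hcon a hico hnd ha1
    omega
  have hrun := desc_run π ((π.symm x : ℕ) - (π.symm y : ℕ)) ((π.symm y : ℕ) + 1)
    (fun a h1 h2 => hall a (by omega) (by omega))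
  have e : (π.symm y : ℕ) + 1 + ((π.symm x : ℕ) - (π.symm y : ℕ))
      = (π.symm x : ℕ) + 1 := by omega
  rw [e] at hrun
  have ex : wordAt m π ((π.symm x : ℕ) + 1) = (x : ℕ) + 1 := by
    rw [wordAt_succ π (π.symm x : ℕ) hq']
    have efin : (⟨(π.symm x : ℕ), hq'⟩ : Fin m) = π.symm x := Fin.ext rfl
    rw [efin, Equiv.apply_symm_apply]
  have ey : wordAt m π ((π.symm y : ℕ) + 1) = (y : ℕ) + 1 := by
    rw [wordAt_succ π (π.symm y : ℕ) hp']
    have efin : (⟨(π.symm y : ℕ), hp'⟩ : Fin m) = π.symm y := Fin.ext rfl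
    rw [efin, Equiv.apply_symm_apply]
  rw [ex, ey] at hrun
  omega

/-- Key bound: `mc x` is at most one plus the number of ascents before the position of `x`. -/
lemma mc_le_aux (hnat : NatLabeled m P) (hπ : IsLinExt m P π) (x : Fin m) :
    mc m P x ≤ 1 +
      ((Finset.Ico 1 m \ DesSet m π) ∩ Finset.Ico 1 ((π.symm x : ℕ) + 1)).card := by
  classical
  unfold mc
  apply csSup_le'
  rintro t ⟨s, rfl, hchain, hxs, hub⟩
  set T : Fin m → Finset ℕ := fun y =>
    (Finset.Ico 1 m \ DesSet m π).filter (fun a => (π.symm y : ℕ) < a) with hT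
  classical
  set g : Fin m → ℕ := fun y => if h : (T y).Nonempty then (T y).min' h else 0 with hg
  have hwit : ∀ y z : Fin m, P.le y z → y ≠ z → ∃ a ∈ T y, a ≤ (π.symm z : ℕ) := by
    intro y z hle hne
    obtain ⟨a, ha1, ha2, ha3, ha4⟩ := exists_ascent hnat hπ z y hle hne
    exact ⟨a, Finset.mem_filter.2 ⟨Finset.mem_sdiff.2 ⟨ha1, ha2⟩, ha3⟩, ha4⟩
  have hgval : ∀ y : Fin m, (T y).Nonempty → g y ∈ T y ∧ (π.symm y : ℕ) < g y := by
    intro y hne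
    have hval : g y = (T y).min' hne := by rw [hg]; simp [hne]
    have hmem : g y ∈ T y := by rw [hval]; exact Finset.min'_mem _ _
    exact ⟨hmem, (Finset.mem_filter.1 hmem).2⟩
  have hgle : ∀ y z : Fin m, P.le y z → y ≠ z → g y ≤ (π.symm z : ℕ) ∧ (T y).Nonempty := by
    intro y z hle hne
    obtain ⟨a, haT, hale⟩ := hwit y z hle hne
    have hney : (T y).Nonempty := ⟨a, haT⟩
    have hval : g y = (T y).min' hney := by rw [hg]; simp [hney]
    exact ⟨by rw [hval]; exact le_trans (Finset.min'_le _ a haT) hale, hney⟩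
  have hmaps : ∀ y ∈ s.erase x,
      g y ∈ (Finset.Ico 1 m \ DesSet m π) ∩ Finset.Ico 1 ((π.symm x : ℕ) + 1) := by
    intro y hy
    obtain ⟨hyne, hys⟩ := Finset.mem_erase.1 hy
    obtain ⟨hle', hney⟩ := hgle y x (hub y hys) hyne
    obtain ⟨hmem, _⟩ := hgval y hney
    have h1 := Finset.mem_filter.1 hmem
    have h2 := Finset.mem_Ico.1 (Finset.mem_sdiff.1 h1.1).1
    exact Finset.mem_inter.2 ⟨h1.1, Finset.mem_Ico.2 ⟨h2.1, by omega⟩⟩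
  have hmono : ∀ y y' : Fin m, y ∈ s.erase x → y' ∈ s.erase x →
      P.le y y' → y ≠ y' → g y < g y' := by
    intro y y' hy hy' hle hne
    obtain ⟨hle1, hney⟩ := hgle y y' hle hne
    -- need (T y').Nonempty : y' is comparable to x
    obtain ⟨hy'ne, hy's⟩ := Finset.mem_erase.1 hy'
    obtain ⟨_, hney'⟩ := hgle y' x (hub y' hy's) hy'ne
    obtain ⟨_, hgt⟩ := hgval y' hney'
    exact lt_of_le_of_lt hle1 hgt
  have hinj : Set.InjOn g (s.erase x : Set (Fin m)) := by
    intro y hy y' hy' heq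
    by_contra hne
    have hy2 : y ∈ s.erase x := hy
    have hy'2 : y' ∈ s.erase x := hy'
    have hys : y ∈ s := Finset.mem_of_mem_erase hy2
    have hy's : y' ∈ s := Finset.mem_of_mem_erase hy'2
    rcases hchain (Finset.mem_coe.2 hys) (Finset.mem_coe.2 hy's) hne with h | h
    · exact (Nat.ne_of_lt (hmono y y' hy2 hy'2 h hne)) heq
    · exact (Nat.ne_of_lt (hmono y' y hy'2 hy2 h (Ne.symm hne))) heq.symm
  have hcard1 : (s.erase x).card ≤
      ((Finset.Ico 1 m \ DesSet m π) ∩ Finset.Ico 1 ((π.symm x : ℕ) + 1)).card :=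
    Finset.card_le_card_of_injOn g hmaps hinj
  have hcard2 := Finset.card_erase_add_one hxs
  omega

/-- `b i` is bounded by the ascent count `α i`. -/
lemma b_le_alpha (hm : 1 ≤ m) (hnat : NatLabeled m P) (hπ : IsLinExt m P π)
    (b : ℕ → ℕ)
    (hbmono : ∀ i ∈ Finset.Icc 1 m, ∀ j ∈ Finset.Icc 1 m, i ≤ j → b i ≤ b j)
    (hbperm : (Finset.Icc 1 m).val.map b =
      (Finset.univ : Finset (Fin m)).val.map (mc m P))
    (i : ℕ) (hi1 : 1 ≤ i) (hi2 : i ≤ m) :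
    b i ≤ 1 + ((Finset.Ico 1 m \ DesSet m π) ∩ Finset.Ico 1 i).card := by
  classical
  set v := 1 + ((Finset.Ico 1 m \ DesSet m π) ∩ Finset.Ico 1 i).card with hv
  by_contra hcon
  push_neg at hcon
  have hcnt := congrArg (Multiset.countP (fun n => n ≤ v)) hbperm
  rw [Multiset.countP_map, Multiset.countP_map] at hcnt
  have hcnt' : ((Finset.Icc 1 m).filter (fun j => b j ≤ v)).card
      = (Finset.univ.filter (fun x : Fin m => mc m P x ≤ v)).card := by
    rw [Finset.card_def, Finset.card_def, Finset.filter_val, Finset.filter_val]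
    exact hcnt
  -- lower bound on the right side
  set ι : ℕ → Fin m := fun j => if h : j - 1 < m then π ⟨j - 1, h⟩ else π ⟨0, by omega⟩
    with hι
  have hιval : ∀ j ∈ Finset.Icc 1 i, ∃ h : j - 1 < m, ι j = π ⟨j - 1, h⟩ := by
    intro j hj
    obtain ⟨hj1, hj2⟩ := Finset.mem_Icc.1 hj
    have h : j - 1 < m := by omega
    exact ⟨h, by rw [hι]; simp [h]⟩
  have hmaps : ∀ j ∈ Finset.Icc 1 i,
      ι j ∈ Finset.univ.filter (fun x : Fin m => mc m P x ≤ v) := by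
    intro j hj
    obtain ⟨hj1, hj2⟩ := Finset.mem_Icc.1 hj
    obtain ⟨h, he⟩ := hιval j hj
    have hb1 := mc_le_aux hnat hπ (ι j)
    have hsymm : (π.symm (ι j) : ℕ) = j - 1 := by
      rw [he, Equiv.symm_apply_apply]
    rw [hsymm] at hb1
    have hidx : j - 1 + 1 = j := by omega
    rw [hidx] at hb1
    have hmono : ((Finset.Ico 1 m \ DesSet m π) ∩ Finset.Ico 1 j).card
        ≤ ((Finset.Ico 1 m \ DesSet m π) ∩ Finset.Ico 1 i).card := by
      apply Finset.card_le_card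
      apply Finset.inter_subset_inter_left
      exact Finset.Ico_subset_Ico le_rfl hj2
    refine Finset.mem_filter.2 ⟨Finset.mem_univ _, ?_⟩
    omega
  have hinj : Set.InjOn ι (Finset.Icc 1 i : Set ℕ) := by
    intro j hj j' hj' heq
    obtain ⟨h, he⟩ := hιval j hj
    obtain ⟨h', he'⟩ := hιval j' hj'
    rw [he, he'] at heq
    have := π.injective heq
    have hj1 : 1 ≤ j := (Finset.mem_Icc.1 hj).1
    have hj'1 : 1 ≤ j' := (Finset.mem_Icc.1 hj').1
    have hvv : j - 1 = j' - 1 := congrArg Fin.val this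
    omega
  have hge : i ≤ (Finset.univ.filter (fun x : Fin m => mc m P x ≤ v)).card := by
    have := Finset.card_le_card_of_injOn ι hmaps hinj
    rw [Nat.card_Icc] at this
    omega
  -- upper bound on the left side
  have hsubs : (Finset.Icc 1 m).filter (fun j => b j ≤ v) ⊆ Finset.Icc 1 (i - 1) := by
    intro j hj
    obtain ⟨hjm, hjb⟩ := Finset.mem_filter.1 hj
    obtain ⟨hj1, hj2⟩ := Finset.mem_Icc.1 hjm
    rcases Nat.lt_or_ge j i with h | h
    · exact Finset.mem_Icc.2 ⟨hj1, by omega⟩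
    · exfalso
      have := hbmono i (Finset.mem_Icc.2 ⟨hi1, hi2⟩) j hjm h
      omega
  have hcard := Finset.card_le_card hsubs
  rw [Nat.card_Icc] at hcard
  omega

lemma double_count (π : Equiv.Perm (Fin m)) (k : ℕ) :
    ∑ i ∈ Finset.Icc 1 k, (DesSet m π ∩ Finset.Ico 1 i).card
      = ∑ d ∈ DesSet m π, ((Finset.Icc 1 k).filter (fun i => d < i)).card := by
  classical
  have h1 : ∀ i : ℕ, DesSet m π ∩ Finset.Ico 1 i
      = (DesSet m π).filter (fun d => d < i) := by
    intro i
    ext d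
    simp only [Finset.mem_inter, Finset.mem_filter, Finset.mem_Ico]
    constructor
    · rintro ⟨hd, _, h⟩; exact ⟨hd, h⟩
    · rintro ⟨hd, h⟩
      exact ⟨hd, (desSet_bounds hd).1, h⟩
  calc ∑ i ∈ Finset.Icc 1 k, (DesSet m π ∩ Finset.Ico 1 i).card
      = ∑ i ∈ Finset.Icc 1 k, ∑ d ∈ DesSet m π, if d < i then 1 else 0 := by
        refine Finset.sum_congr rfl fun i _ => ?_
        rw [h1 i, Finset.card_filter]
    _ = ∑ d ∈ DesSet m π, ∑ i ∈ Finset.Icc 1 k, if d < i then 1 else 0 :=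
        Finset.sum_comm
    _ = _ := by
        refine Finset.sum_congr rfl fun d _ => ?_
        rw [Finset.card_filter]

lemma gauss_sum_Icc (k : ℕ) : 2 * (∑ i ∈ Finset.Icc 1 k, (i : ℤ)) = k * (k + 1) := by
  induction k with
  | zero => simp
  | succ n ih =>
    have e : Finset.Icc 1 (n + 1) = insert (n + 1) (Finset.Icc 1 n) := by
      ext a
      simp only [Finset.mem_Icc, Finset.mem_insert]
      omega
    rw [e, Finset.sum_insert (by simp)]
    push_cast
    push_cast at ih
    ring_nf
    ring_nf at ih
    linarith

end AuxProof

theorem statement8 (m : ℕ) (hm : 1 ≤ m) (P : PartialOrder (Fin m))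
    (hnat : NatLabeled m P)
    (b : ℕ → ℕ)
    (hbmono : ∀ i ∈ Finset.Icc 1 m, ∀ j ∈ Finset.Icc 1 m, i ≤ j → b i ≤ b j)
    (hbperm : (Finset.Icc 1 m).val.map b =
      (Finset.univ : Finset (Fin m)).val.map (mc m P))
    (π : Equiv.Perm (Fin m)) (hπ : IsLinExt m P π)
    (k : ℕ) (hk : k ≤ m) :
    (∑ i ∈ Finset.Icc 1 k, (b i : ℤ)) ≤
      (majIdx m π : ℤ) - k * desNum m π + k * (k + 1) / 2 := by
  classical
  have hb : ∀ i ∈ Finset.Icc 1 k, (b i : ℤ)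
      ≤ 1 + (((Finset.Ico 1 m \ DesSet m π) ∩ Finset.Ico 1 i).card : ℤ) := by
    intro i hi
    obtain ⟨hi1, hi2⟩ := Finset.mem_Icc.1 hi
    have := b_le_alpha hm hnat hπ b hbmono hbperm i hi1 (le_trans hi2 hk)
    exact_mod_cast this
  have h1 : (∑ i ∈ Finset.Icc 1 k, (b i : ℤ))
      ≤ ∑ i ∈ Finset.Icc 1 k,
          (1 + (((Finset.Ico 1 m \ DesSet m π) ∩ Finset.Ico 1 i).card : ℤ)) :=
    Finset.sum_le_sum hb
  have hα : ∀ i ∈ Finset.Icc 1 k,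
      (1 + (((Finset.Ico 1 m \ DesSet m π) ∩ Finset.Ico 1 i).card : ℤ))
        = (i : ℤ) - ((DesSet m π ∩ Finset.Ico 1 i).card : ℤ) := by
    intro i hi
    obtain ⟨hi1, hik⟩ := Finset.mem_Icc.1 hi
    have him : i ≤ m := le_trans hik hk
    have hset : (Finset.Ico 1 m \ DesSet m π) ∩ Finset.Ico 1 i
        = Finset.Ico 1 i \ DesSet m π := by
      ext a
      simp only [Finset.mem_inter, Finset.mem_sdiff, Finset.mem_Ico]
      constructor
      · rintro ⟨⟨_, h2⟩, h3, h4⟩; exact ⟨⟨h3, h4⟩, h2⟩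
      · rintro ⟨⟨h3, h4⟩, h2⟩; exact ⟨⟨⟨h3, by omega⟩, h2⟩, h3, h4⟩
    rw [hset]
    have hc := Finset.card_sdiff_add_card_inter (Finset.Ico 1 i) (DesSet m π)
    rw [Finset.inter_comm] at hc
    have hIco : (Finset.Ico 1 i).card = i - 1 := by rw [Nat.card_Ico]
    omega
  rw [Finset.sum_congr rfl hα, Finset.sum_sub_distrib] at h1
  have hdc := double_count (m := m) π k
  have hdcZ : (∑ i ∈ Finset.Icc 1 k, ((DesSet m π ∩ Finset.Ico 1 i).card : ℤ))
      = ∑ d ∈ DesSet m π, (((Finset.Icc 1 k).filter (fun i => d < i)).card : ℤ) := by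
    exact_mod_cast congrArg (Nat.cast (R := ℤ)) hdc
  rw [hdcZ] at h1
  have hterm : ∀ d ∈ DesSet m π,
      ((k : ℤ) - d) ≤ (((Finset.Icc 1 k).filter (fun i => d < i)).card : ℤ) := by
    intro d hd
    have hd1 : 1 ≤ d := (desSet_bounds hd).1
    have hsub : Finset.Ioc d k ⊆ (Finset.Icc 1 k).filter (fun i => d < i) := by
      intro a ha
      obtain ⟨h1', h2'⟩ := Finset.mem_Ioc.1 ha
      exact Finset.mem_filter.2 ⟨Finset.mem_Icc.2 ⟨by omega, h2'⟩, h1'⟩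
    have hcard := Finset.card_le_card hsub
    rw [Nat.card_Ioc] at hcard
    omega
  have h2 : -(∑ d ∈ DesSet m π,
        (((Finset.Icc 1 k).filter (fun i => d < i)).card : ℤ))
      ≤ ∑ d ∈ DesSet m π, ((d : ℤ) - k) := by
    rw [← Finset.sum_neg_distrib]
    apply Finset.sum_le_sum
    intro d hd
    have := hterm d hd
    omega
  have h3 : (∑ d ∈ DesSet m π, ((d : ℤ) - k))
      = (majIdx m π : ℤ) - (desNum m π : ℤ) * k := by
    rw [Finset.sum_sub_distrib, Finset.sum_const, nsmul_eq_mul]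
    have hmaj : (majIdx m π : ℤ) = ∑ d ∈ DesSet m π, (d : ℤ) := by
      unfold majIdx
      push_cast
      rfl
    rw [hmaj]
    rfl
  have hg := gauss_sum_Icc k
  have hdiv : (k : ℤ) * ((k : ℤ) + 1) / 2 = ∑ i ∈ Finset.Icc 1 k, (i : ℤ) := by
    rw [← hg]
    exact Int.mul_ediv_cancel_left _ (by norm_num)
  have hcomm2 : (k : ℤ) * (desNum m π : ℤ) = (desNum m π : ℤ) * k := mul_comm _ _
  rw [hdiv] at *
  linarith [h1, h2, h3]
end

section
/- Let P be a naturally labeled partial order on {1,2,…,m} that is not a chain (i.e., ≤_P is not a total order). Then for every integer 1 ≤ k ≤ m, the coefficient of x^k in B(q,x) is a nonzero polynomial in q and q_min([x^k]B(q,x)) = min{ maj(π) − k·des(π) + k(k+1)/2 : π ∈ L(P), 1 ≤ des(π) ≤ k }. -/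
open Finset Polynomial LaurentPolynomial

attribute [local instance] Classical.propDecidable

def tri (n : ℕ) : ℕ := ∑ i ∈ Finset.range (n+1), i

lemma tri_zero : tri 0 = 0 := rfl

lemma tri_succ (n : ℕ) : tri (n+1) = tri n + (n+1) := Finset.sum_range_succ _ _

lemma tri_mono : Monotone tri :=
  monotone_nat_of_le_succ (fun n => by rw [tri_succ]; omega)

lemma tri_pred (t : ℕ) (h : 1 ≤ t) : tri t = tri (t-1) + t := by
  obtain ⟨u, rfl⟩ : ∃ u, t = u + 1 := ⟨t-1, by omega⟩
  simpa using tri_succ u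

lemma two_tri (n : ℕ) : 2 * tri n = n * (n+1) := by
  induction n with
  | zero => rfl
  | succ n ih => rw [tri_succ, Nat.mul_add, ih]; ring

lemma sum_lb : ∀ (n : ℕ) (S : Finset ℕ), S.card = n → 0 ∉ S → tri n ≤ ∑ i ∈ S, i := by
  intro n
  induction n with
  | zero => intro S h h0; simp [tri_zero]
  | succ n ih =>
    intro S hc h0
    have hne : S.Nonempty := Finset.card_pos.mp (by omega)
    set M := S.max' hne with hM
    have hMmem : M ∈ S := S.max'_mem hne
    have hsub : S ⊆ Finset.Icc 1 M := fun x hx => Finset.mem_Icc.mpr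
      ⟨Nat.one_le_iff_ne_zero.mpr (by rintro rfl; exact h0 hx), S.le_max' x hx⟩
    have hcard : n + 1 ≤ M := by
      have := Finset.card_le_card hsub
      rwa [hc, Nat.card_Icc, Nat.add_sub_cancel] at this
    have hih := ih (S.erase M) (by rw [Finset.card_erase_of_mem hMmem, hc]; rfl)
      (fun h => h0 (Finset.mem_of_mem_erase h))
    have hsum : M + ∑ i ∈ S.erase M, i = ∑ i ∈ S, i := Finset.add_sum_erase _ (fun i => i) hMmem
    rw [tri_succ]
    omega

lemma max_lb (S : Finset ℕ) (hne : S.Nonempty) (h0 : 0 ∉ S) : S.card ≤ S.max' hne := by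
  have hsub : S ⊆ Finset.Icc 1 (S.max' hne) := fun x hx => Finset.mem_Icc.mpr
    ⟨Nat.one_le_iff_ne_zero.mpr (by rintro rfl; exact h0 hx), S.le_max' x hx⟩
  have := Finset.card_le_card hsub
  rwa [Nat.card_Icc, Nat.add_sub_cancel] at this

lemma qIntP_coeff_zero (n : ℕ) (h : 1 ≤ n) : (qIntP n).coeff 0 = 1 := by
  rw [qIntP, Polynomial.finset_sum_coeff]
  rw [Finset.sum_eq_single 0]
  · simp
  · intro b _ hb; simp [Polynomial.coeff_X_pow, hb.symm]
  · intro h'; exact absurd (Finset.mem_range.mpr (by omega)) h'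

lemma mul_coeff_eq_zero_of_lt {p g : Polynomial ℤ} {a : ℕ} (h : ∀ e < a, p.coeff e = 0) :
    ∀ e < a, (p * g).coeff e = 0 := by
  intro e he
  rw [Polynomial.coeff_mul]
  apply Finset.sum_eq_zero
  rintro ⟨i, j⟩ hij
  rw [Finset.HasAntidiagonal.mem_antidiagonal] at hij
  have : i < a := by omega
  simp [h i this]

lemma mul_coeff_at {p g : Polynomial ℤ} {a : ℕ} (h : ∀ e < a, p.coeff e = 0) :
    (p * g).coeff a = p.coeff a * g.coeff 0 := by
  rw [Polynomial.coeff_mul, Finset.sum_eq_single (a, 0)]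
  · intro b hb hbne
    rw [Finset.HasAntidiagonal.mem_antidiagonal] at hb
    have : b.1 < a := by
      rcases Nat.lt_or_ge b.1 a with h'|h'
      · exact h'
      · exfalso; apply hbne; have : b.1 = a := by omega
        have : b.2 = 0 := by omega
        exact Prod.ext (by omega) this
    simp [h _ this]
  · intro h'; exact absurd (Finset.HasAntidiagonal.mem_antidiagonal.mpr (by omega)) h'

noncomputable def PB (n : ℕ) : Polynomial (Polynomial ℤ) :=
  ∏ i ∈ Finset.Icc 1 n, (Polynomial.C (Polynomial.X ^ i) * Polynomial.X + Polynomial.C (qIntP i))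

lemma PB_natDegree_le (n : ℕ) : (PB n).natDegree ≤ n := by
  refine le_trans (Polynomial.natDegree_prod_le _ _) ?_
  have : ∀ i ∈ Finset.Icc 1 n,
      (Polynomial.C (Polynomial.X ^ i) * Polynomial.X + Polynomial.C (qIntP i)).natDegree ≤ 1 := by
    intro i _
    refine le_trans (Polynomial.natDegree_add_le _ _) ?_
    simp only [Polynomial.natDegree_C, max_le_iff]
    constructor
    · exact le_trans (Polynomial.natDegree_C_mul_le _ _) (le_of_eq Polynomial.natDegree_X)
    · omega
  refine le_trans (Finset.sum_le_sum this) ?_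
  simp [Nat.card_Icc]

lemma PB_coeff_gt (n t : ℕ) (h : n < t) : (PB n).coeff t = 0 :=
  Polynomial.coeff_eq_zero_of_natDegree_lt (lt_of_le_of_lt (PB_natDegree_le n) h)

lemma PB_main : ∀ (n t : ℕ), t ≤ n →
    (∀ e < tri t, ((PB n).coeff t).coeff e = 0) ∧ ((PB n).coeff t).coeff (tri t) = 1 := by
  intro n
  induction n with
  | zero =>
    intro t ht
    have : t = 0 := by omega
    subst this
    constructor
    · intro e he; rw [tri_zero] at he; omega
    · simp [PB, tri_zero]
  | succ n ih =>
    intro t ht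
    have hPB : PB (n+1) = PB n *
        (Polynomial.C (Polynomial.X ^ (n+1)) * Polynomial.X + Polynomial.C (qIntP (n+1))) := by
      rw [PB, Finset.prod_Icc_succ_top (by omega : 1 ≤ n + 1), ← PB]
    have hco : ∀ t', (PB (n+1)).coeff t' =
        (if t' = 0 then 0 else (PB n).coeff (t'-1) * Polynomial.X ^ (n+1))
          + (PB n).coeff t' * qIntP (n+1) := by
      intro t'
      rw [hPB, mul_add, Polynomial.coeff_add]
      congr 1
      · rw [show PB n * (Polynomial.C (Polynomial.X ^ (n+1)) * Polynomial.X)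
            = (PB n * Polynomial.C (Polynomial.X ^ (n+1))) * Polynomial.X by ring]
        cases t' with
        | zero =>
          simp [Polynomial.mul_coeff_zero]
        | succ u =>
          rw [Polynomial.coeff_mul_X, Polynomial.coeff_mul_C]
          simp
      · rw [Polynomial.coeff_mul_C]
    constructor
    · -- vanishing
      intro e he
      rw [hco]
      rw [Polynomial.coeff_add]
      have h2 : (((PB n).coeff t * qIntP (n+1))).coeff e = 0 := by
        rcases Nat.lt_or_ge n t with h'|h'
        · have ht' : t = n + 1 := by omega
          rw [ht', PB_coeff_gt n (n+1) (by omega)]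
          simp
        · exact mul_coeff_eq_zero_of_lt ((ih t h').1) e he
      rw [h2, add_zero]
      by_cases ht0 : t = 0
      · simp [ht0]
      · rw [if_neg ht0]
        rw [Polynomial.coeff_mul_X_pow']
        by_cases hle : n + 1 ≤ e
        · rw [if_pos hle]
          have htt : tri t ≤ tri (t-1) + (n+1) := by
            have := tri_pred t (by omega)
            omega
          exact (ih (t-1) (by omega)).1 (e - (n+1)) (by omega)
        · rw [if_neg hle]
    · -- value at tri t
      rw [hco, Polynomial.coeff_add]
      by_cases ht0 : t = 0
      · subst ht0
        rw [if_pos rfl]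
        have hmc := mul_coeff_at (p := (PB n).coeff 0) (g := qIntP (n+1)) (a := 0) (by omega)
        have hval := (ih 0 (by omega)).2
        rw [tri_zero] at hval ⊢
        rw [hmc, hval, qIntP_coeff_zero (n+1) (by omega)]
        simp
      · rw [if_neg ht0, Polynomial.coeff_mul_X_pow']
        rcases Nat.lt_or_ge n t with h'|h'
        · -- t = n+1
          have ht' : t = n + 1 := by omega
          subst ht'
          have hle : n + 1 ≤ tri (n+1) := by rw [tri_succ]; omega
          rw [if_pos hle]
          have h1 : tri (n+1) - (n+1) = tri n := by rw [tri_succ]; omega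
          have h2 : (PB n).coeff (n+1) = 0 := PB_coeff_gt n (n+1) (by omega)
          rw [h2]
          simp only [Nat.add_sub_cancel, h1]
          rw [(ih n (by omega)).2]
          simp
        · -- t ≤ n
          have hval := mul_coeff_at (p := (PB n).coeff t) (g := qIntP (n+1)) (a := tri t) ((ih t h').1)
          rw [hval, (ih t h').2, qIntP_coeff_zero (n+1) (by omega), one_mul]
          have hX : (if n + 1 ≤ tri t then ((PB n).coeff (t-1)).coeff (tri t - (n+1)) else 0) = 0 := by
            by_cases hle : n + 1 ≤ tri t
            · rw [if_pos hle]
              have htt : tri t = tri (t-1) + t := tri_pred t (by omega)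
              exact (ih (t-1) (by omega)).1 (tri t - (n+1)) (by omega)
            · rw [if_neg hle]
          rw [hX, zero_add]

noncomputable def PA (s : ℕ) : Polynomial (Polynomial ℤ) :=
  ∏ i ∈ Finset.Icc 1 s, (Polynomial.X - Polynomial.C (qIntP i))

lemma PA_monic (s : ℕ) : (PA s).Monic :=
  monic_prod_of_monic _ _ (fun i _ => Polynomial.monic_X_sub_C _)

lemma PA_natDegree (s : ℕ) : (PA s).natDegree = s := by
  rw [PA, Polynomial.natDegree_prod_of_monic _ _ (fun i _ => Polynomial.monic_X_sub_C _)]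
  simp [Polynomial.natDegree_X_sub_C, Nat.card_Icc]

lemma PA_coeff_top (s : ℕ) : (PA s).coeff s = 1 := by
  have h := (PA_monic s).coeff_natDegree
  rwa [PA_natDegree] at h

lemma PA_coeff_gt (s r : ℕ) (h : s < r) : (PA s).coeff r = 0 :=
  Polynomial.coeff_eq_zero_of_natDegree_lt (by rwa [PA_natDegree])

lemma g_main (m k s : ℕ) (hs1 : 1 ≤ s) (hsk : s ≤ k) (hkm : k ≤ m) :
    (∀ e < tri (k-s), ((PA (s-1) * PB (m-s)).coeff (k-1)).coeff e = 0) ∧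
    ((PA (s-1) * PB (m-s)).coeff (k-1)).coeff (tri (k-s)) = 1 := by
  have hg : (PA (s-1) * PB (m-s)).coeff (k-1)
      = ∑ x ∈ Finset.HasAntidiagonal.antidiagonal (k-1), (PA (s-1)).coeff x.1 * (PB (m-s)).coeff x.2 :=
    Polynomial.coeff_mul _ _ _
  have hterm0 : ∀ x ∈ Finset.HasAntidiagonal.antidiagonal (k-1), x ≠ (s-1, k-s) →
      ∀ e ≤ tri (k-s), ((PA (s-1)).coeff x.1 * (PB (m-s)).coeff x.2).coeff e = 0 := by
    rintro ⟨r, t⟩ hx hne e he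
    rw [Finset.HasAntidiagonal.mem_antidiagonal] at hx
    simp only at hx ⊢
    rcases lt_trichotomy r (s-1) with hr|hr|hr
    · have ht : k - s + 1 ≤ t := by omega
      by_cases htm : t ≤ m - s
      · have hv := (PB_main (m-s) t htm).1
        have h1 : tri (k-s) < tri (k-s+1) := by rw [tri_succ]; omega
        have h2 : tri (k-s+1) ≤ tri t := tri_mono ht
        rw [mul_comm]
        exact mul_coeff_eq_zero_of_lt hv e (by omega)
      · rw [PB_coeff_gt (m-s) t (by omega)]
        simp
    · exfalso; apply hne
      have : t = k - s := by omega
      rw [Prod.ext_iff]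
      exact ⟨hr, this⟩
    · rw [PA_coeff_gt (s-1) r hr]
      simp
  have hmem : (s-1, k-s) ∈ Finset.HasAntidiagonal.antidiagonal (k-1) := Finset.HasAntidiagonal.mem_antidiagonal.mpr (by omega)
  constructor
  · intro e he
    rw [hg, Polynomial.finset_sum_coeff]
    apply Finset.sum_eq_zero
    intro x hx
    by_cases hxe : x = (s-1, k-s)
    · subst hxe
      simp only []
      rw [PA_coeff_top, one_mul]
      exact (PB_main (m-s) (k-s) (by omega)).1 e he
    · exact hterm0 x hx hxe e (le_of_lt he)
  · rw [hg, Polynomial.finset_sum_coeff]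
    rw [Finset.sum_eq_single (s-1, k-s)]
    · rw [PA_coeff_top, one_mul]
      exact (PB_main (m-s) (k-s) (by omega)).2
    · intro x hx hxe; exact hterm0 x hx hxe _ (le_refl _)
    · intro h'; exact absurd hmem h'

noncomputable def TSP (m s mj : ℕ) : Polynomial (Polynomial ℤ) :=
  Polynomial.C (Polynomial.X ^ (mj - tri (s-1))) * (PA (s-1) * PB (m - s))

lemma TSP_coeff (m s mj k : ℕ) : (TSP m s mj).coeff (k-1)
    = (PA (s-1) * PB (m-s)).coeff (k-1) * Polynomial.X ^ (mj - tri (s-1)) := by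
  rw [TSP, Polynomial.coeff_C_mul]; ring

lemma TSP_le (m k s mj : ℕ) (hs1 : 1 ≤ s) (hsk : s ≤ k) (hkm : k ≤ m) :
    (∀ e < (mj - tri (s-1)) + tri (k-s), ((TSP m s mj).coeff (k-1)).coeff e = 0) ∧
    ((TSP m s mj).coeff (k-1)).coeff ((mj - tri (s-1)) + tri (k-s)) = 1 := by
  have hG := g_main m k s hs1 hsk hkm
  constructor
  · intro e he
    rw [TSP_coeff, Polynomial.coeff_mul_X_pow']
    by_cases hle : mj - tri (s-1) ≤ e
    · rw [if_pos hle]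
      exact hG.1 _ (by omega)
    · rw [if_neg hle]
  · rw [TSP_coeff, Polynomial.coeff_mul_X_pow', if_pos (by omega)]
    rw [Nat.add_sub_cancel_left]
    exact hG.2

lemma TSP_gt (m k s mj : ℕ) : ∀ e < mj - tri (s-1), ((TSP m s mj).coeff (k-1)).coeff e = 0 := by
  intro e he
  rw [TSP_coeff, Polynomial.coeff_mul_X_pow', if_neg (by omega)]

lemma toLaurent_coeff_nat (p : Polynomial ℤ) (n : ℕ) : AddMonoidAlgebra.coeff (toLaurent p) (n : ℤ) = p.coeff n := by
  rw [coeff_toLaurent]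
  exact Finsupp.mapDomain_apply Nat.castEmbedding.injective _ n

lemma toLaurent_coeff_neg (p : Polynomial ℤ) (i : ℤ) (h : i < 0) : AddMonoidAlgebra.coeff (toLaurent p) i = 0 := by
  rw [coeff_toLaurent, Finsupp.mapDomain_notin_range]
  rintro ⟨n, hn⟩; have : (n : ℤ) = i := hn; omega

lemma qInt_natCast (i : ℕ) : qInt (i : ℤ) = toLaurent (qIntP i) := by
  rw [qInt, if_pos (by positivity), qIntP, map_sum, Int.toNat_natCast]
  exact Finset.sum_congr rfl (fun j _ => (Polynomial.toLaurent_X_pow j).symm)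

lemma half_eq_tri (s : ℕ) : s * (s - 1) / 2 = tri (s - 1) := by
  rcases Nat.eq_zero_or_pos s with rfl|hs
  · rfl
  · have h := two_tri (s-1)
    have : (s-1) * (s - 1 + 1) = s * (s-1) := by
      have : s - 1 + 1 = s := by omega
      rw [this]; ring
    omega

lemma tSummand_eq (m s mj : ℕ) (h : tri (s-1) ≤ mj) :
    tSummand m s mj = (TSP m s mj).map toLaurent := by
  rw [tSummand, TSP, PA, PB, Polynomial.map_mul, Polynomial.map_mul, Polynomial.map_prod,
    Polynomial.map_prod, Polynomial.map_C, ← mul_assoc]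
  refine congrArg₂ (· * ·) ?_ ?_
  refine congrArg₂ (· * ·) ?_ ?_
  · congr 1
    rw [Polynomial.toLaurent_X_pow]
    congr 1
    rw [half_eq_tri]
    omega
  · apply Finset.prod_congr rfl
    intro i _
    rw [Polynomial.map_sub, Polynomial.map_X, Polynomial.map_C, qInt_natCast]
  · apply Finset.prod_congr rfl
    intro i _
    rw [Polynomial.map_add, Polynomial.map_mul, Polynomial.map_C, Polynomial.map_C,
      Polynomial.map_X, qInt_natCast, Polynomial.toLaurent_X_pow]

-- characterization of descents
lemma mem_DesSet_iff {m : ℕ} (π : Equiv.Perm (Fin m)) (i : ℕ) (h1 : 1 ≤ i) (h2 : i < m) :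
    i ∈ DesSet m π ↔
      (π ⟨i, h2⟩ : ℕ) < (π ⟨i - 1, Nat.lt_of_le_of_lt (Nat.sub_le i 1) h2⟩ : ℕ) := by
  rw [DesSet, Finset.mem_filter, Finset.mem_Ico]
  have hw1 : wordAt m π (i+1) = (π ⟨i, h2⟩ : ℕ) + 1 := by
    rw [wordAt, dif_pos (show i + 1 - 1 < m by omega)]
    congr 1
  have hw2 : wordAt m π i = (π ⟨i - 1, Nat.lt_of_le_of_lt (Nat.sub_le i 1) h2⟩ : ℕ) + 1 := by
    rw [wordAt, dif_pos (show i - 1 < m by omega)]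
  rw [hw1, hw2]
  omega

lemma DesSet_range {m : ℕ} (π : Equiv.Perm (Fin m)) {i : ℕ} (h : i ∈ DesSet m π) :
    1 ≤ i ∧ i < m := by
  have := Finset.mem_filter.mp h
  have := Finset.mem_Ico.mp this.1
  omega

lemma zero_not_mem_DesSet {m : ℕ} (π : Equiv.Perm (Fin m)) : 0 ∉ DesSet m π := by
  intro h
  have := DesSet_range π h
  omega

lemma exists_des_one (m : ℕ) (P : PartialOrder (Fin m)) (hnat : NatLabeled m P)
    (hnc : ¬ ∀ x y : Fin m, P.le x y ∨ P.le y x) :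
    ∃ π : Equiv.Perm (Fin m), IsLinExt m P π ∧ desNum m π = 1 := by
  have hadj : ∃ a : ℕ, ∃ h : a + 1 < m,
      ¬ P.le ⟨a, by omega⟩ ⟨a+1, h⟩ ∧ ¬ P.le ⟨a+1, h⟩ ⟨a, by omega⟩ := by
    by_contra hno
    push_neg at hno
    apply hnc
    have hstep : ∀ (a : ℕ) (h : a + 1 < m), P.le ⟨a, by omega⟩ ⟨a+1, h⟩ := by
      intro a h
      by_contra hc
      have h2 := hno a h hc
      have := hnat _ _ h2
      rw [Fin.le_def] at this
      simp at this
    have hchain : ∀ (d : ℕ) (x y : Fin m), (y : ℕ) = (x : ℕ) + d → P.le x y := by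
      intro d
      induction d with
      | zero =>
        intro x y h
        have : x = y := Fin.ext (by omega)
        rw [this]
      | succ d ihd =>
        intro x y h
        have hy := y.isLt
        have hxd : (x : ℕ) + d < m := by omega
        have h3 : y = (⟨(x : ℕ) + d + 1, by omega⟩ : Fin m) := Fin.ext (by simp; omega)
        have h1 := ihd x ⟨(x : ℕ) + d, hxd⟩ rfl
        have h2 := hstep ((x : ℕ) + d) (by omega)
        rw [h3]
        exact P.le_trans _ _ _ h1 h2
    intro x y
    rcases le_total x y with h|h
    · exact Or.inl (hchain ((y : ℕ) - (x : ℕ)) x y (by rw [Fin.le_def] at h; omega))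
    · exact Or.inr (hchain ((x : ℕ) - (y : ℕ)) y x (by rw [Fin.le_def] at h; omega))
  obtain ⟨a, ham, hab, hba⟩ := hadj
  set A : Fin m := ⟨a, Nat.lt_of_succ_lt ham⟩ with hA
  set B : Fin m := ⟨a+1, ham⟩ with hB
  have hval : ∀ x : Fin m, ((Equiv.swap A B) x : ℕ) =
      if (x : ℕ) = a then a + 1 else if (x : ℕ) = a + 1 then a else (x : ℕ) := by
    intro x
    rw [Equiv.swap_apply_def]
    by_cases h1 : x = A
    · rw [if_pos h1, if_pos (by rw [h1])]
    · rw [if_neg h1]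
      by_cases h2 : x = B
      · rw [if_pos h2, if_neg (by rw [h2]; simp [hB]), if_pos (by rw [h2])]
      · rw [if_neg h2, if_neg (by intro hc; exact h1 (Fin.ext hc)),
          if_neg (by intro hc; exact h2 (Fin.ext hc))]
  refine ⟨Equiv.swap A B, ?_, ?_⟩
  · intro i j hP
    by_contra hij
    have hle := hnat _ _ hP
    rw [Fin.le_def] at hle
    have hvi := hval i
    have hvj := hval j
    have hiB : i = B ∧ j = A := by
      clear hP hab hba
      rw [Fin.le_def] at hij
      have hji : (j : ℕ) < (i : ℕ) := by omega
      by_cases heq : (Equiv.swap A B) i = (Equiv.swap A B) j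
      · have := (Equiv.swap A B).injective heq
        subst this
        omega
      · have hlt : ((Equiv.swap A B) i : ℕ) < ((Equiv.swap A B) j : ℕ) :=
          lt_of_le_of_ne hle (fun hc => heq (Fin.ext hc))
        refine ⟨Fin.ext ?_, Fin.ext ?_⟩ <;>
          · show _ = (_ : ℕ)
            simp only [hA, hB]
            split_ifs at hvi hvj <;> omega
    rw [hiB.1, hiB.2, Equiv.swap_apply_right, Equiv.swap_apply_left] at hP
    exact hab hP
  · clear hab hba hnc
    have hD : DesSet m (Equiv.swap A B) = {a+1} := by
      ext i
      rw [Finset.mem_singleton]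
      constructor
      · intro hi
        obtain ⟨h1, h2⟩ := DesSet_range _ hi
        rw [mem_DesSet_iff _ i h1 h2] at hi
        by_contra hne
        have hv1 := hval ⟨i, h2⟩
        have hv2 := hval ⟨i - 1, Nat.lt_of_le_of_lt (Nat.sub_le i 1) h2⟩
        simp only [] at hv1 hv2
        split_ifs at hv1 hv2 <;> omega
      · rintro rfl
        rw [mem_DesSet_iff _ (a+1) (by omega) ham]
        have hv1 := hval ⟨a+1, ham⟩
        have hv2 := hval ⟨a+1-1, Nat.lt_of_le_of_lt (Nat.sub_le (a+1) 1) ham⟩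
        simp only [] at hv1 hv2
        split_ifs at hv1 hv2 <;> omega
    rw [desNum, hD, Finset.card_singleton]

lemma reduce_step (m : ℕ) (P : PartialOrder (Fin m)) (hnat : NatLabeled m P)
    (π : Equiv.Perm (Fin m)) (hlin : IsLinExt m P π) (h2 : 2 ≤ desNum m π) :
    ∃ π', IsLinExt m P π' ∧ desNum m π' = desNum m π - 1 ∧
      majIdx m π' + desNum m π ≤ majIdx m π := by
  set D := DesSet m π with hD
  have hcard2 : 2 ≤ D.card := h2
  have hne : D.Nonempty := Finset.card_pos.mp (by omega)
  set t := D.max' hne with ht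
  have htD : t ∈ D := D.max'_mem hne
  set E := D.erase t with hE
  have hneE : E.Nonempty := Finset.card_pos.mp (by
    rw [hE, Finset.card_erase_of_mem htD]; omega)
  set c := E.max' hneE with hc
  have hcE : c ∈ E := E.max'_mem hneE
  have hcD : c ∈ D := Finset.mem_of_mem_erase hcE
  have hct : c < t := lt_of_le_of_ne (D.le_max' c hcD) (Finset.ne_of_mem_erase hcE)
  have hcm : c < m := (DesSet_range π hcD).2
  have hc1 : 1 ≤ c := (DesSet_range π hcD).1
  -- the suffix positions and values
  set Pos : Finset (Fin m) := Finset.univ.filter (fun i : Fin m => c ≤ (i : ℕ)) with hPos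
  set Aset : Finset (Fin m) := Pos.image π with hAs
  have hPoscard : Pos.card = m - c := by
    have himg : Pos.image (Fin.val) = Finset.Ico c m := by
      ext n
      simp only [Finset.mem_image, Finset.mem_Ico, hPos, Finset.mem_filter, Finset.mem_univ,
        true_and]
      constructor
      · rintro ⟨i, hi, rfl⟩; exact ⟨hi, i.isLt⟩
      · rintro ⟨h1, h2⟩; exact ⟨⟨n, h2⟩, h1, rfl⟩
    have := congrArg Finset.card himg
    rwa [Finset.card_image_of_injective _ Fin.val_injective, Nat.card_Ico] at this
  have hAcard : Aset.card = m - c := by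
    rw [hAs, Finset.card_image_of_injective _ π.injective, hPoscard]
  set e := Aset.orderIsoOfFin hAcard with he
  have hmemA : ∀ x : Fin m, x ∈ Aset ↔ ∃ i : Fin m, c ≤ (i : ℕ) ∧ π i = x := by
    intro x
    rw [hAs, Finset.mem_image]
    constructor
    · rintro ⟨i, hi, rfl⟩
      exact ⟨i, (Finset.mem_filter.mp hi).2, rfl⟩
    · rintro ⟨i, hi, rfl⟩
      exact ⟨i, Finset.mem_filter.mpr ⟨Finset.mem_univ _, hi⟩, rfl⟩
  set f : Fin m → Fin m := fun j =>
    if h : (j : ℕ) < c then π j else (e ⟨(j : ℕ) - c, by omega⟩ : Fin m) with hf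
  have hf_lt : ∀ (j : Fin m) (h : (j : ℕ) < c), f j = π j := by
    intro j h; rw [hf]; simp only [dif_pos h]
  have hf_ge : ∀ (j : Fin m) (h : ¬ (j : ℕ) < c), f j ∈ Aset := by
    intro j h
    rw [hf]; simp only [dif_neg h]
    exact (e _).2
  have hf_mono : ∀ i j : Fin m, ¬ (i : ℕ) < c → (i : ℕ) < (j : ℕ) → f i < f j := by
    intro i j hi hij
    have hj : ¬ (j : ℕ) < c := by omega
    rw [hf]; simp only [dif_neg hi, dif_neg hj]
    have hle : (⟨(i : ℕ) - c, by omega⟩ : Fin (m - c)) ≤ ⟨(j : ℕ) - c, by omega⟩ := by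
      rw [Fin.le_def]; simp; omega
    have hne' : (⟨(i : ℕ) - c, by omega⟩ : Fin (m - c)) ≠ ⟨(j : ℕ) - c, by omega⟩ := by
      rw [Fin.ne_iff_vne]; simp; omega
    have h1 : (e ⟨(i : ℕ) - c, by omega⟩ : Fin m) ≤ (e ⟨(j : ℕ) - c, by omega⟩ : Fin m) :=
      Subtype.coe_le_coe.mpr (e.le_iff_le.mpr hle)
    have h2 : (e ⟨(i : ℕ) - c, by omega⟩ : Fin m) ≠ (e ⟨(j : ℕ) - c, by omega⟩ : Fin m) :=
      fun hc' => hne' (e.injective (Subtype.coe_injective hc'))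
    rw [Fin.lt_def]
    rw [Fin.le_def] at h1
    have h2' : ((e ⟨(i : ℕ) - c, by omega⟩ : Fin m) : ℕ) ≠ ((e ⟨(j : ℕ) - c, by omega⟩ : Fin m) : ℕ) :=
      fun hc' => h2 (Fin.ext hc')
    omega
  have hinj : Function.Injective f := by
    intro i j hij
    by_cases hi : (i : ℕ) < c <;> by_cases hj : (j : ℕ) < c
    · exact π.injective (by rwa [hf_lt i hi, hf_lt j hj] at hij)
    · exfalso
      have hmem := hf_ge j hj
      rw [← hij, hf_lt i hi, hmemA] at hmem
      obtain ⟨i', hi', hpi⟩ := hmem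
      have := π.injective hpi
      subst this
      omega
    · exfalso
      have hmem := hf_ge i hi
      rw [hij, hf_lt j hj, hmemA] at hmem
      obtain ⟨i', hi', hpi⟩ := hmem
      have := π.injective hpi
      subst this
      omega
    · rw [hf] at hij
      simp only [dif_neg hi, dif_neg hj] at hij
      have := e.injective (Subtype.coe_injective hij)
      rw [Fin.mk.injEq] at this
      exact Fin.ext (by omega)
  set π' : Equiv.Perm (Fin m) := Equiv.ofBijective f (Finite.injective_iff_bijective.mp hinj)
    with hπ'def
  have hπ' : ∀ j, π' j = f j := fun j => rfl
  -- minimality of value at position c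
  have hminA : ∀ x ∈ Aset, f ⟨c, hcm⟩ ≤ x := by
    intro x hx
    obtain ⟨idx, hidx⟩ := e.surjective ⟨x, hx⟩
    have h0 : f ⟨c, hcm⟩ = (e ⟨0, by omega⟩ : Fin m) := by
      rw [hf]; simp
    rw [h0]
    calc ((e ⟨0, by omega⟩ : { x // x ∈ Aset }) : Fin m) ≤ ((e idx : { x // x ∈ Aset }) : Fin m) :=
          Subtype.coe_le_coe.mpr (e.le_iff_le.mpr (by rw [Fin.le_def]; simp))
      _ = x := by rw [hidx]
  have hlin' : IsLinExt m P π' := by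
    intro i j hP
    rw [hπ', hπ'] at hP
    by_contra hij
    rw [Fin.le_def] at hij
    by_cases hi : (i : ℕ) < c <;> by_cases hj : (j : ℕ) < c
    · rw [hf_lt i hi, hf_lt j hj] at hP
      have hij2 := hlin i j hP
      rw [Fin.le_def] at hij2
      clear hP
      omega
    · clear hP
      omega
    · have hmem := hf_ge i hi
      rw [hmemA] at hmem
      obtain ⟨i0, hi0c, hpi0⟩ := hmem
      rw [← hpi0, hf_lt j hj] at hP
      have hij2 := hlin i0 j hP
      rw [Fin.le_def] at hij2
      clear hP
      omega
    · have h1 := hnat _ _ hP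
      have hji : (j : ℕ) < (i : ℕ) := by clear hP h1; omega
      have h2 := hf_mono j i hj hji
      rw [Fin.le_def] at h1
      rw [Fin.lt_def] at h2
      clear hP
      omega
  have hDes' : DesSet m π' = E := by
    ext p
    by_cases hp : 1 ≤ p ∧ p < m
    · obtain ⟨hp1, hpm⟩ := hp
      have hpm1 : p - 1 < m := by omega
      rw [mem_DesSet_iff π' p hp1 hpm]
      rcases lt_trichotomy p c with h|h|h
      · have e1 : π' ⟨p, hpm⟩ = π ⟨p, hpm⟩ := hf_lt _ h
        have e2 : π' ⟨p - 1, Nat.lt_of_le_of_lt (Nat.sub_le p 1) hpm⟩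
            = π ⟨p - 1, Nat.lt_of_le_of_lt (Nat.sub_le p 1) hpm⟩ := hf_lt _ (by simp; omega)
        rw [e1, e2, ← mem_DesSet_iff π p hp1 hpm]
        constructor
        · intro h'
          exact Finset.mem_erase.mpr ⟨by omega, h'⟩
        · exact fun h' => Finset.mem_of_mem_erase h'
      · subst h
        constructor
        · intro _
          exact hcE
        · intro _
          have e2 : π' ⟨c - 1, Nat.lt_of_le_of_lt (Nat.sub_le c 1) hpm⟩
              = π ⟨c - 1, Nat.lt_of_le_of_lt (Nat.sub_le c 1) hpm⟩ := hf_lt _ (by simp; omega)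
          have h1 : π' ⟨c, hpm⟩ ≤ π ⟨c, hpm⟩ :=
            hminA (π ⟨c, hpm⟩) ((hmemA _).mpr ⟨⟨c, hpm⟩, le_refl c, rfl⟩)
          have hdc := (mem_DesSet_iff π c hc1 hcm).mp hcD
          rw [Fin.le_def] at h1
          rw [e2]
          have hsame : (π ⟨c, hcm⟩ : ℕ) = (π ⟨c, hpm⟩ : ℕ) := rfl
          omega
      · constructor
        · intro h'
          exfalso
          have h2 := hf_mono ⟨p - 1, hpm1⟩ ⟨p, hpm⟩ (by simp; omega) (by simp; omega)
          rw [Fin.lt_def] at h2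
          have e1 : π' ⟨p, hpm⟩ = f ⟨p, hpm⟩ := rfl
          have e2 : π' ⟨p - 1, Nat.lt_of_le_of_lt (Nat.sub_le p 1) hpm⟩ = f ⟨p - 1, hpm1⟩ := rfl
          rw [e1, e2] at h'
          omega
        · intro h'
          exfalso
          have := E.le_max' p h'
          omega
    · constructor
      · intro h'
        exact absurd (DesSet_range π' h') hp
      · intro h'
        exact absurd (DesSet_range π (Finset.mem_of_mem_erase h')) hp
  have hdes' : desNum m π' = desNum m π - 1 := by
    rw [desNum, hDes', hE, Finset.card_erase_of_mem htD]
    rfl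
  have hmaj' : majIdx m π' + t = majIdx m π := by
    rw [majIdx, hDes', hE, majIdx]
    exact Finset.sum_erase_add D (fun i => i) htD
  have hts : desNum m π ≤ t := max_lb D hne (zero_not_mem_DesSet π)
  exact ⟨π', hlin', hdes', by omega⟩

lemma reduce_many (m : ℕ) (P : PartialOrder (Fin m)) (hnat : NatLabeled m P) (k : ℕ)
    (hk : 1 ≤ k) : ∀ (n : ℕ) (π : Equiv.Perm (Fin m)), IsLinExt m P π → desNum m π = k + n →
    ∃ π', IsLinExt m P π' ∧ desNum m π' = k ∧
      majIdx m π' + ∑ i ∈ Finset.Icc (k+1) (k+n), i ≤ majIdx m π := by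
  intro n
  induction n with
  | zero =>
    intro π hlin hd
    exact ⟨π, hlin, by omega, by simp⟩
  | succ n ih =>
    intro π hlin hd
    obtain ⟨π₁, hlin₁, hd₁, hm₁⟩ := reduce_step m P hnat π hlin (by omega)
    obtain ⟨π', hlin', hd', hm'⟩ := ih π₁ hlin₁ (by omega)
    refine ⟨π', hlin', hd', ?_⟩
    rw [show k + (n+1) = (k + n) + 1 by omega,
      Finset.sum_Icc_succ_top (by omega : k + 1 ≤ k + n + 1)]
    omega

lemma tri_add_Icc (k n : ℕ) : tri k + ∑ i ∈ Finset.Icc (k+1) (k+n), i = tri (k+n) := by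
  induction n with
  | zero => simp
  | succ n ih =>
    rw [show k + (n+1) = (k + n) + 1 by omega,
      Finset.sum_Icc_succ_top (by omega : k + 1 ≤ k + n + 1), tri_succ]
    omega

theorem statement16 (m : ℕ) (hm : 1 ≤ m) (P : PartialOrder (Fin m))
    (hnat : NatLabeled m P)
    (hnc : ¬ ∀ x y : Fin m, P.le x y ∨ P.le y x)
    (k : ℕ) (hk1 : 1 ≤ k) (hk2 : k ≤ m) :
    (Bpoly m P).coeff k ≠ 0 ∧
    ∃ v : ℤ,
      IsLeast
        {v : ℤ | ∃ π : Equiv.Perm (Fin m), IsLinExt m P π ∧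
          1 ≤ desNum m π ∧ desNum m π ≤ k ∧
          v = (majIdx m π : ℤ) - k * desNum m π + k * (k + 1) / 2} v ∧
      IsLeast {i : ℤ | AddMonoidAlgebra.coeff ((Bpoly m P).coeff k) i ≠ 0} v := by
  classical
  have maj_lb : ∀ π : Equiv.Perm (Fin m), tri (desNum m π) ≤ majIdx m π :=
    fun π => sum_lb _ _ rfl (zero_not_mem_DesSet π)
  set L1 := Finset.univ.filter
    (fun π : Equiv.Perm (Fin m) => IsLinExt m P π ∧ 1 ≤ desNum m π) with hL1
  set Sk := Finset.univ.filter
    (fun π : Equiv.Perm (Fin m) => IsLinExt m P π ∧ 1 ≤ desNum m π ∧ desNum m π ≤ k) with hSk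
  set Wf : Equiv.Perm (Fin m) → ℕ :=
    fun π => (majIdx m π - tri (desNum m π - 1)) + tri (k - desNum m π) with hWf
  obtain ⟨π₁, hπ₁lin, hπ₁des⟩ := exists_des_one m P hnat hnc
  have hπ₁Sk : π₁ ∈ Sk := Finset.mem_filter.mpr ⟨Finset.mem_univ _, hπ₁lin, by omega, by omega⟩
  have hSkne : (Sk.image Wf).Nonempty := ⟨_, Finset.mem_image_of_mem Wf hπ₁Sk⟩
  set Wmin := (Sk.image Wf).min' hSkne with hWmin
  obtain ⟨π₀, hπ₀Sk, hπ₀W⟩ := Finset.mem_image.mp ((Sk.image Wf).min'_mem hSkne)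
  have hWmin_le : ∀ π ∈ Sk, Wmin ≤ Wf π :=
    fun π hπ => Finset.min'_le _ _ (Finset.mem_image_of_mem Wf hπ)
  set cp : Polynomial ℤ := ∑ π ∈ L1, ((TSP m (desNum m π) (majIdx m π)).coeff (k-1)) with hcp
  -- bridge to the Laurent polynomial
  have hB : (Bpoly m P).coeff k = toLaurent cp := by
    have hmap : Bpoly m P = Polynomial.map toLaurent
        (Polynomial.X * ∑ π ∈ L1, TSP m (desNum m π) (majIdx m π)) := by
      rw [Bpoly, Polynomial.map_mul, Polynomial.map_X, Polynomial.map_sum]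
      congr 1
      apply Finset.sum_congr rfl
      intro π hπ
      exact tSummand_eq m (desNum m π) (majIdx m π)
        (le_trans (tri_mono (Nat.sub_le _ 1)) (maj_lb π))
    rw [hmap, Polynomial.coeff_map]
    congr 1
    rw [hcp, show k = (k-1) + 1 by omega, Polynomial.coeff_X_mul, Polynomial.finset_sum_coeff]
    exact Finset.sum_congr rfl (fun π _ => by norm_num)
  -- strict lower bound for permutations with many descents
  have hGT : ∀ π ∈ L1, k < desNum m π → Wmin < majIdx m π - tri (desNum m π - 1) := by
    intro π hπ hk'
    obtain ⟨hlin, hdes⟩ := (Finset.mem_filter.mp hπ).2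
    obtain ⟨π', hlin', hdes', hm'⟩ := reduce_many m P hnat k hk1 (desNum m π - k) π hlin (by omega)
    have hπ'Sk : π' ∈ Sk := Finset.mem_filter.mpr ⟨Finset.mem_univ _, hlin', by omega, by omega⟩
    have h1 : Wmin ≤ Wf π' := hWmin_le π' hπ'Sk
    simp only [hWf] at h1
    rw [hdes'] at h1
    simp only [Nat.sub_self, tri_zero, add_zero] at h1
    have e2 : k + (desNum m π - k) = desNum m π := by omega
    rw [e2] at hm'
    have e1 := tri_add_Icc k (desNum m π - k)
    rw [e2] at e1
    have e3 : tri (desNum m π) = tri (desNum m π - 1) + desNum m π := tri_pred _ (by omega)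
    have e4 : tri k = tri (k-1) + k := tri_pred k (by omega)
    have e5 : tri (desNum m π - 1) ≤ majIdx m π := le_trans (tri_mono (by omega)) (maj_lb π)
    have e6 : tri k ≤ majIdx m π' := by rw [← hdes']; exact maj_lb π'
    omega
  -- vanishing below Wmin
  have hvan : ∀ e : ℕ, e < Wmin → cp.coeff e = 0 := by
    intro e he
    rw [hcp, Polynomial.finset_sum_coeff]
    apply Finset.sum_eq_zero
    intro π hπ
    obtain ⟨hlin, hdes⟩ := (Finset.mem_filter.mp hπ).2
    rcases le_or_gt (desNum m π) k with hsk|hsk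
    · have hW := hWmin_le π (Finset.mem_filter.mpr ⟨Finset.mem_univ _, hlin, hdes, hsk⟩)
      simp only [hWf] at hW
      exact (TSP_le m k (desNum m π) (majIdx m π) hdes hsk hk2).1 e (by omega)
    · have := hGT π hπ hsk
      exact TSP_gt m k (desNum m π) (majIdx m π) e (by omega)
  -- positivity at Wmin
  have hπ₀L1 : π₀ ∈ L1 := by
    obtain ⟨_, hlin, h1, _⟩ := Finset.mem_filter.mp hπ₀Sk
    exact Finset.mem_filter.mpr ⟨Finset.mem_univ _, hlin, h1⟩
  have hterm : ∀ π ∈ L1, 0 ≤ ((TSP m (desNum m π) (majIdx m π)).coeff (k-1)).coeff Wmin := by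
    intro π hπ
    obtain ⟨hlin, hdes⟩ := (Finset.mem_filter.mp hπ).2
    rcases le_or_gt (desNum m π) k with hsk|hsk
    · have hW := hWmin_le π (Finset.mem_filter.mpr ⟨Finset.mem_univ _, hlin, hdes, hsk⟩)
      simp only [hWf] at hW
      rcases eq_or_lt_of_le hW with heq|hlt
      · rw [heq, (TSP_le m k (desNum m π) (majIdx m π) hdes hsk hk2).2]
        norm_num
      · rw [(TSP_le m k (desNum m π) (majIdx m π) hdes hsk hk2).1 Wmin (by omega)]
    · have := hGT π hπ hsk
      rw [TSP_gt m k (desNum m π) (majIdx m π) Wmin (by omega)]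
  have hπ₀val : ((TSP m (desNum m π₀) (majIdx m π₀)).coeff (k-1)).coeff Wmin = 1 := by
    obtain ⟨_, hlin, h1, hsk⟩ := Finset.mem_filter.mp hπ₀Sk
    have heq : Wmin = (majIdx m π₀ - tri (desNum m π₀ - 1)) + tri (k - desNum m π₀) := by
      rw [hWmin.trans hπ₀W.symm, hWf]
    rw [heq]
    exact (TSP_le m k (desNum m π₀) (majIdx m π₀) h1 hsk hk2).2
  have hpos : 0 < cp.coeff Wmin := by
    rw [hcp, Polynomial.finset_sum_coeff]
    apply Finset.sum_pos' hterm
    exact ⟨π₀, hπ₀L1, by rw [hπ₀val]; norm_num⟩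
  -- the cast identity
  have htri_k : ((k:ℤ) * ((k:ℤ) + 1)) / 2 = (tri k : ℤ) := by
    have h2 : ((k:ℤ)) * ((k:ℤ) + 1) = 2 * (tri k : ℤ) := by exact_mod_cast (two_tri k).symm
    rw [h2]
    exact Int.mul_ediv_cancel_left _ (by norm_num)
  have hE : ∀ π ∈ Sk, (majIdx m π : ℤ) - (k : ℤ) * (desNum m π : ℤ)
      + (k : ℤ) * ((k : ℤ) + 1) / 2 = ((Wf π : ℕ) : ℤ) := by
    intro π hπ
    obtain ⟨_, hlin, h1s, hsk⟩ := Finset.mem_filter.mp hπ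
    have e5 : tri (desNum m π - 1) ≤ majIdx m π := le_trans (tri_mono (by omega)) (maj_lb π)
    rw [htri_k]
    simp only [hWf]
    rw [Nat.cast_add, Nat.cast_sub e5]
    have t1 : (2:ℤ) * (tri (desNum m π - 1) : ℤ)
        = ((desNum m π : ℤ) - 1) * (desNum m π : ℤ) := by
      have := two_tri (desNum m π - 1)
      have h' : (desNum m π - 1) * ((desNum m π - 1) + 1) = (desNum m π - 1) * desNum m π := by
        congr 1; omega
      rw [h'] at this
      have := congrArg (fun x : ℕ => (x : ℤ)) this
      push_cast at this
      rw [Nat.cast_sub h1s] at this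
      push_cast at this
      linarith
    have t2 : (2:ℤ) * (tri (k - desNum m π) : ℤ)
        = ((k : ℤ) - (desNum m π : ℤ)) * (((k : ℤ) - (desNum m π : ℤ)) + 1) := by
      have := congrArg (fun x : ℕ => (x : ℤ)) (two_tri (k - desNum m π))
      push_cast at this
      rw [Nat.cast_sub hsk] at this
      push_cast at this
      linarith
    have t3 : (2:ℤ) * (tri k : ℤ) = (k : ℤ) * ((k : ℤ) + 1) := by
      exact_mod_cast two_tri k
    have h2g : 2 * ((majIdx m π : ℤ) - (k : ℤ) * (desNum m π : ℤ) + (tri k : ℤ))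
        = 2 * (((majIdx m π : ℤ) - (tri (desNum m π - 1) : ℤ)) + (tri (k - desNum m π) : ℤ)) := by
      linear_combination t3 + t1 - t2
    linarith
  refine ⟨?_, ⟨(Wmin : ℤ), ⟨?_, ?_⟩, ⟨?_, ?_⟩⟩⟩
  · intro hzero
    rw [hB] at hzero
    rw [Polynomial.toLaurent_eq_zero] at hzero
    rw [hzero] at hpos
    simp at hpos
  · -- membership in the value set
    obtain ⟨_, hlin, h1, hsk⟩ := Finset.mem_filter.mp hπ₀Sk
    refine ⟨π₀, hlin, h1, hsk, ?_⟩
    rw [hE π₀ hπ₀Sk]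
    exact Nat.cast_inj.mpr (hWmin.trans hπ₀W.symm)
  · rintro v' ⟨π, hlin, h1, hk', hv'⟩
    have hπSk : π ∈ Sk := Finset.mem_filter.mpr ⟨Finset.mem_univ _, hlin, h1, hk'⟩
    rw [hv', hE π hπSk]
    exact_mod_cast hWmin_le π hπSk
  · show AddMonoidAlgebra.coeff ((Bpoly m P).coeff k) ((Wmin : ℕ) : ℤ) ≠ 0
    rw [hB, toLaurent_coeff_nat]
    omega
  · rintro i hi
    rw [hB] at hi
    rcases lt_or_ge i 0 with hneg|hge
    · exact absurd (toLaurent_coeff_neg cp i hneg) hi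
    · obtain ⟨j, rfl⟩ : ∃ j : ℕ, i = (j : ℤ) := ⟨i.toNat, (Int.toNat_of_nonneg hge).symm⟩
      simp only [Set.mem_setOf_eq] at hi
      rw [toLaurent_coeff_nat] at hi
      have hj : Wmin ≤ j := by
        by_contra h
        exact hi (hvan j (by omega))
      exact_mod_cast hj
end
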